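/- Let A be a real invertible n×n matrix. Then A has a real square root (a real n×n matrix X with X² = A) if and only if, for every integer r ≥ 1 and every real eigenvalue λ < 0 of A, the number of Jordan blocks J_r(λ) in the Jordan form of A — which equals rank((A − λI)^{r−1}) − 2·rank((A − λI)^r) + rank((A − λI)^{r+1}) — is even. -/

import Mathlib

set_option maxHeartbeats 2000000
open Polynomial

section RingSqrt
variable {R : Type*} [CommRing R]

variable {R : Type*} [CommRing R]

lemma sqrt_one_add_nilpotent_aux (h2 : IsUnit (2:R)) :
    ∀ n : ℕ, ∀ x : R, x ^ n = 0 → ∃ w : R, w * w = 1 + x := by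
  intro n
  induction n using Nat.strong_induction_on with
  | _ n IH =>
    intro x hx
    rcases Nat.eq_zero_or_pos n with rfl | hn
    · have : Subsingleton R := subsingleton_of_zero_eq_one (by simpa using hx.symm)
      exact ⟨0, Subsingleton.elim _ _⟩
    rcases eq_or_lt_of_le (Nat.succ_le_of_lt hn) with h1 | hn2
    · refine ⟨1, by rw [← h1] at hx; simp at hx; simp [hx]⟩
    -- n ≥ 2
    obtain ⟨u, hu⟩ := h2
    set half : R := ↑u⁻¹ with hhalf
    have h2h : (2:R) * half = 1 := by rw [← hu, hhalf]; exact u.mul_inv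
    set w₁ : R := 1 + half * x with hw₁
    have hw₁u : IsUnit w₁ := (Commute.all _ _).isNilpotent_mul_left ⟨n, hx⟩ |>.isUnit_one_add
    obtain ⟨v, hv⟩ := hw₁u
    have hw₁sq : w₁ * w₁ = 1 + x + (half * half) * (x * x) := by
      have : w₁ * w₁ = 1 + (2 * half) * x + (half * half) * (x * x) := by ring
      rw [this, h2h, one_mul]
    set y : R := (-(half * half) * (x * x)) * (↑v⁻¹ * ↑v⁻¹) with hy
    have key : 1 + x = w₁ * w₁ * (1 + y) := by
      have hvv : w₁ * w₁ * (↑v⁻¹ * ↑v⁻¹ : R) = 1 := by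
        rw [← hv]; rw [show (v:R) * v * (↑v⁻¹ * ↑v⁻¹) = (v * v⁻¹ : Rˣ) * (v * v⁻¹ : Rˣ) by push_cast; ring]
        simp
      calc 1 + x = w₁ * w₁ - (half*half) * (x*x) := by rw [hw₁sq]; ring
      _ = w₁ * w₁ * (1 + y) := by
            rw [hy]
            have : w₁ * w₁ * (1 + -(half * half) * (x * x) * (↑v⁻¹ * ↑v⁻¹))
                = w₁ * w₁ + (w₁ * w₁ * (↑v⁻¹ * ↑v⁻¹)) * (-(half * half) * (x * x)) := by ring
            rw [this, hvv]; ring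
    have hym : y ^ ((n+1)/2) = 0 := by
      have h2m : n ≤ 2 * ((n+1)/2) := by omega
      have : y ^ ((n+1)/2) = (x ^ (2 * ((n+1)/2))) * ((-(half*half)) * (↑v⁻¹ * ↑v⁻¹)) ^ ((n+1)/2) := by
        rw [hy]; rw [pow_mul]; ring
      rw [this, ← Nat.sub_add_cancel h2m, pow_add, hx]; ring
    obtain ⟨s, hs⟩ := IH ((n+1)/2) (by omega) y hym
    exact ⟨w₁ * s, by rw [show w₁ * s * (w₁ * s) = w₁ * w₁ * (s * s) by ring, hs, key]⟩


lemma sqrt_one_add_nilpotent (h2 : IsUnit (2:R)) {x : R} (hx : IsNilpotent x) :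
    ∃ w : R, w * w = 1 + x := by
  obtain ⟨n, hn⟩ := hx
  exact sqrt_one_add_nilpotent_aux h2 n x hn


lemma sqrt_of_nilpotent_diff (h2 : IsUnit (2:R)) {u v : R} (hv : IsUnit v)
    (h : IsNilpotent (u - v * v)) : ∃ w : R, w * w = u := by
  obtain ⟨V, hV⟩ := hv
  have hVV : v * v * (↑V⁻¹ * ↑V⁻¹ : R) = 1 := by
    rw [← hV, show (V:R) * V * (↑V⁻¹ * ↑V⁻¹) = ((V * V⁻¹ : Rˣ) : R) * ((V * V⁻¹ : Rˣ) : R) by push_cast; ring]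
    simp
  set y : R := (u - v * v) * (↑V⁻¹ * ↑V⁻¹) with hy
  have hynil : IsNilpotent y := (Commute.all _ _).isNilpotent_mul_right h
  obtain ⟨s, hs⟩ := sqrt_one_add_nilpotent h2 hynil
  refine ⟨v * s, ?_⟩
  have : v * s * (v * s) = (v * v) * (s * s) := by ring
  rw [this, hs, hy]
  have : v * v * (1 + (u - v * v) * (↑V⁻¹ * ↑V⁻¹)) =
      v * v + (v * v * (↑V⁻¹ * ↑V⁻¹)) * (u - v * v) := by ring
  rw [this, hVV]; ring

lemma sqrt_of_residue {K : Type*} [CommRing K] (h2 : IsUnit (2:R)) (ρ : R →+* K)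
    (hs : Function.Surjective ρ) (hker : ∀ a : R, ρ a = 0 → IsNilpotent a)
    (x : R) (ν : K) (hν : ν * ν = ρ x) (hνu : IsUnit ν) : ∃ w : R, w * w = x := by
  obtain ⟨v, hv⟩ := hs ν
  obtain ⟨v', hv'⟩ := hs (↑(hνu.unit⁻¹) : K)
  have h1 : ρ (v * v' - 1) = 0 := by
    rw [map_sub, map_mul, hv, hv', map_one]
    simp
  have hvu : IsUnit v := by
    have : IsUnit (v * v') := by
      have := (hker _ h1).isUnit_one_add
      simpa using this
    exact isUnit_of_mul_isUnit_left this
  refine sqrt_of_nilpotent_diff h2 hvu (hker _ ?_)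
  rw [map_sub, map_mul, hv, hν, sub_self]

end RingSqrt

section Modules

/-- `N` has an ℝ-linear square root of the `X`-action. -/
def XSqrt (N : Type*) [AddCommGroup N] [Module ℝ N] [Module ℝ[X] N]
    [IsScalarTower ℝ ℝ[X] N] : Prop :=
  ∃ g : N →ₗ[ℝ] N, ∀ v : N, g (g v) = (X : ℝ[X]) • v

variable {N N' : Type*} [AddCommGroup N] [Module ℝ N] [Module ℝ[X] N] [IsScalarTower ℝ ℝ[X] N]
  [AddCommGroup N'] [Module ℝ N'] [Module ℝ[X] N'] [IsScalarTower ℝ ℝ[X] N']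

lemma xsqrt_of_equiv (e : N ≃ₗ[ℝ[X]] N') (h : XSqrt N') : XSqrt N := by
  obtain ⟨g, hg⟩ := h
  refine ⟨((e.restrictScalars ℝ).symm.toLinearMap ∘ₗ g) ∘ₗ (e.restrictScalars ℝ).toLinearMap, ?_⟩
  intro v
  simp only [LinearMap.comp_apply, LinearEquiv.coe_coe, LinearEquiv.restrictScalars_apply,
    LinearEquiv.restrictScalars_symm_apply]
  rw [e.apply_symm_apply, hg, map_smul, e.symm_apply_apply]

lemma xsqrt_prod (h : XSqrt N) (h' : XSqrt N') : XSqrt (N × N') := by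
  obtain ⟨g, hg⟩ := h; obtain ⟨g', hg'⟩ := h'
  exact ⟨g.prodMap g', fun v => by simp [hg, hg', Prod.smul_def]⟩

lemma xsqrt_pair : XSqrt (N × N) := by
  refine ⟨{ toFun := fun p => ((X : ℝ[X]) • p.2, p.1),
            map_add' := by intro p q; simp [smul_add, Prod.ext_iff]
            map_smul' := by
              intro r p
              refine Prod.ext ?_ rfl
              simp only [Prod.smul_fst, Prod.smul_snd, RingHom.id_apply]
              exact (smul_comm _ _ _) }, ?_⟩
  intro v
  rfl

lemma xsqrt_of_subsingleton [Subsingleton N] : XSqrt N :=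
  ⟨0, fun v => Subsingleton.elim _ _⟩

lemma xsqrt_quot (I : Ideal ℝ[X]) (w : ℝ[X] ⧸ I)
    (hw : w * w = Ideal.Quotient.mk I X) : XSqrt (ℝ[X] ⧸ I) := by
  refine ⟨LinearMap.mulLeft ℝ w, fun v => ?_⟩
  simp only [LinearMap.mulLeft_apply]
  rw [← mul_assoc, hw, ← Ideal.Quotient.algebraMap_eq, ← Algebra.smul_def]

end Modules

lemma isUnit_two_quot (I : Ideal ℝ[X]) : IsUnit (2 : ℝ[X] ⧸ I) := by
  have : IsUnit (2:ℝ) := IsUnit.of_mul_eq_one (1/2) (by norm_num)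
  have h := this.map (algebraMap ℝ (ℝ[X] ⧸ I))
  simpa only [map_ofNat] using h

lemma sqrt_in_field_of_two_le_finrank (K : Type*) [Field K] [Algebra ℝ K]
    [FiniteDimensional ℝ K] (h : 2 ≤ Module.finrank ℝ K) (z : K) : ∃ ν : K, ν * ν = z := by
  haveI : Algebra.IsAlgebraic ℝ K := Algebra.IsAlgebraic.of_finite ℝ K
  haveI : NoZeroSMulDivisors ℝ K :=
    inferInstance
  let φ : K →ₐ[ℝ] ℂ := IsAlgClosed.lift
  have hinj : Function.Injective φ := φ.toRingHom.injective
  have hrange : LinearMap.range (φ.toLinearMap : K →ₗ[ℝ] ℂ) = ⊤ := by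
    apply Submodule.eq_top_of_finrank_eq
    rw [LinearMap.finrank_range_of_inj hinj, Complex.finrank_real_complex]
    have hle : Module.finrank ℝ K ≤ 2 := by
      have := (LinearMap.range (φ.toLinearMap : K →ₗ[ℝ] ℂ)).finrank_le
      rwa [LinearMap.finrank_range_of_inj hinj, Complex.finrank_real_complex] at this
    omega
  obtain ⟨c, hc⟩ := IsAlgClosed.exists_pow_nat_eq (k := ℂ) (φ z) (n := 2) (by norm_num)
  obtain ⟨k, hk⟩ : ∃ k : K, φ k = c := by
    have : c ∈ LinearMap.range (φ.toLinearMap : K →ₗ[ℝ] ℂ) := hrange ▸ Submodule.mem_top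
    obtain ⟨k, hk⟩ := this; exact ⟨k, hk⟩
  refine ⟨k, hinj ?_⟩
  rw [map_mul, hk, ← pow_two, hc]

lemma good_pos_root (lam : ℝ) (hlam : 0 < lam) (e : ℕ) (he : 1 ≤ e) :
    ∃ w : ℝ[X] ⧸ Ideal.span {(X - C lam) ^ e},
      w * w = Ideal.Quotient.mk _ (X : ℝ[X]) := by
  set I : Ideal ℝ[X] := Ideal.span {(X - C lam) ^ e}
  have hev : ∀ a ∈ I, eval lam a = 0 := by
    intro a ha
    rw [Ideal.mem_span_singleton] at ha
    obtain ⟨c, rfl⟩ := ha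
    simp [eval_pow, he, pow_eq_zero_iff (by omega : e ≠ 0)]
  let ρ : ℝ[X] ⧸ I →+* ℝ := Ideal.Quotient.lift I (evalRingHom lam) (by
    intro a ha; simpa using hev a ha)
  have hs : Function.Surjective ρ := by
    intro t; exact ⟨Ideal.Quotient.mk I (C t), by simp [ρ]⟩
  have hker : ∀ a : ℝ[X] ⧸ I, ρ a = 0 → IsNilpotent a := by
    intro a ha
    obtain ⟨q, rfl⟩ := Ideal.Quotient.mk_surjective a
    rw [Ideal.Quotient.lift_mk] at ha
    have hdvd : (X - C lam) ∣ q := dvd_iff_isRoot.mpr (by simpa using ha)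
    refine ⟨e, ?_⟩
    rw [← map_pow, Ideal.Quotient.eq_zero_iff_mem, Ideal.mem_span_singleton]
    exact pow_dvd_pow_of_dvd hdvd e
  refine sqrt_of_residue (isUnit_two_quot I) ρ hs hker _ (Real.sqrt lam) ?_ ?_
  · rw [Real.mul_self_sqrt hlam.le]; simp [ρ]
  · exact isUnit_iff_ne_zero.mpr (ne_of_gt (Real.sqrt_pos.mpr hlam))

lemma good_big_degree (π : ℝ[X]) (hπ : Irreducible π) (hd : 2 ≤ π.natDegree)
    (e : ℕ) (he : 1 ≤ e) :
    ∃ w : ℝ[X] ⧸ Ideal.span {π ^ e}, w * w = Ideal.Quotient.mk _ (X : ℝ[X]) := by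
  haveI : Fact (Irreducible π) := ⟨hπ⟩
  set I : Ideal ℝ[X] := Ideal.span {π ^ e}
  let ρ : ℝ[X] ⧸ I →+* AdjoinRoot π := Ideal.Quotient.lift I (AdjoinRoot.mk π) (by
    intro a ha
    rw [Ideal.mem_span_singleton] at ha
    exact AdjoinRoot.mk_eq_zero.mpr (dvd_trans (dvd_pow_self π (by omega)) ha))
  have hs : Function.Surjective ρ := by
    intro k
    obtain ⟨q, hq⟩ := AdjoinRoot.mk_surjective k
    exact ⟨Ideal.Quotient.mk I q, by simp [ρ, hq]⟩
  have hker : ∀ a : ℝ[X] ⧸ I, ρ a = 0 → IsNilpotent a := by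
    intro a ha
    obtain ⟨q, rfl⟩ := Ideal.Quotient.mk_surjective a
    rw [Ideal.Quotient.lift_mk] at ha
    have hdvd : π ∣ q := AdjoinRoot.mk_eq_zero.mp ha
    refine ⟨e, ?_⟩
    rw [← map_pow, Ideal.Quotient.eq_zero_iff_mem, Ideal.mem_span_singleton]
    exact pow_dvd_pow_of_dvd hdvd e
  haveI : FiniteDimensional ℝ (AdjoinRoot π) :=
    Module.Finite.of_basis (AdjoinRoot.powerBasis hπ.ne_zero).basis
  have hfr : Module.finrank ℝ (AdjoinRoot π) = π.natDegree := by
    rw [(AdjoinRoot.powerBasis hπ.ne_zero).finrank, AdjoinRoot.powerBasis_dim]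
  obtain ⟨ν, hν⟩ := sqrt_in_field_of_two_le_finrank (AdjoinRoot π) (by omega) (AdjoinRoot.root π)
  refine sqrt_of_residue (isUnit_two_quot I) ρ hs hker _ ν ?_ ?_
  · rw [hν]; simp [ρ, AdjoinRoot.mk_X]
  · refine isUnit_iff_ne_zero.mpr ?_
    intro h0
    have : AdjoinRoot.root π = 0 := by rw [← hν, h0, mul_zero]
    have hdvd : π ∣ X := AdjoinRoot.mk_eq_zero.mp (by rwa [AdjoinRoot.mk_X])
    have := Polynomial.natDegree_le_of_dvd hdvd X_ne_zero
    simp [natDegree_X] at this; omega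

section Split
variable {R : Type*} [Semiring R] {ι : Type*} [DecidableEq ι] (M : ι → Type*)
  [∀ i, AddCommMonoid (M i)] [∀ i, Module R (M i)]

/-- Splitting off one coordinate of a finite product over a finset. -/
def piEraseEquiv (s : Finset ι) (i₀ : ι) (h₀ : i₀ ∈ s) :
    (∀ i : {x // x ∈ s}, M i) ≃ₗ[R] M i₀ × (∀ i : {x // x ∈ s.erase i₀}, M i) where
  toFun f := (f ⟨i₀, h₀⟩, fun j => f ⟨j.1, Finset.mem_of_mem_erase j.2⟩)
  invFun p := fun j => if h : (j : ι) = i₀ then h ▸ p.1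
    else p.2 ⟨j.1, Finset.mem_erase.mpr ⟨h, j.2⟩⟩
  map_add' f g := rfl
  map_smul' r f := rfl
  left_inv f := by
    funext j
    rcases j with ⟨j, hj⟩
    by_cases h : j = i₀
    · subst h; simp
    · simp [h]
  right_inv p := by
    rcases p with ⟨a, g⟩
    refine Prod.ext (by simp) ?_
    funext j
    rcases j with ⟨j, hj⟩
    have h : j ≠ i₀ := (Finset.mem_erase.mp hj).1
    simp [h]

end Split

section SmulX
variable {N : Type*} [AddCommGroup N] [Module ℝ N] [Module ℝ[X] N] [IsScalarTower ℝ ℝ[X] N]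

/-- The action of a polynomial `p` as an ℝ-linear endomorphism. -/
noncomputable def smulX (p : ℝ[X]) : N →ₗ[ℝ] N where
  toFun v := p • v
  map_add' := smul_add p
  map_smul' r v := by
    simp only [RingHom.id_apply]
    rw [← algebraMap_smul ℝ[X] r v, ← mul_smul, mul_comm, mul_smul, algebraMap_smul]

@[simp] lemma smulX_apply (p : ℝ[X]) (v : N) : smulX p v = p • v := rfl

end SmulX

section Pieces
variable (lam : ℝ) (k : ℕ)

lemma pi_smul_quot (I : Ideal ℝ[X]) (p : ℝ[X]) (v : ℝ[X] ⧸ I) : p • v = Ideal.Quotient.mk I p * v := by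
  rw [← Ideal.Quotient.algebraMap_eq, ← Algebra.smul_def]

lemma ker_smulX_quot_coprime {π : ℝ[X]} (hπ : Irreducible π)
    (hna : ¬ Associated π (X - C lam)) (e : ℕ) :
    LinearMap.ker (smulX ((X - C lam) ^ k) :
      (ℝ[X] ⧸ Ideal.span {π ^ e}) →ₗ[ℝ] ℝ[X] ⧸ Ideal.span {π ^ e}) = ⊥ := by
  have hcop : IsCoprime ((X - C lam) ^ k) (π ^ e) := by
    refine IsCoprime.pow ?_
    rw [(irreducible_X_sub_C lam).coprime_iff_not_dvd]
    intro hdvd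
    exact hna (((irreducible_X_sub_C lam).associated_of_dvd hπ hdvd).symm)
  obtain ⟨a, b, hab⟩ := hcop
  rw [LinearMap.ker_eq_bot']
  intro v hv
  simp only [smulX_apply] at hv
  have h1 : (1 : ℝ[X]) • v = v := one_smul _ _
  rw [← hab] at h1
  rw [add_smul, mul_smul, hv, smul_zero, mul_smul] at h1
  obtain ⟨q, rfl⟩ := Ideal.Quotient.mk_surjective v
  rw [← h1]
  have : (π ^ e) • (Ideal.Quotient.mk (Ideal.span {π ^ e}) q) = 0 := by
    rw [pi_smul_quot, ← map_mul, Ideal.Quotient.eq_zero_iff_mem]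
    exact Ideal.mem_span_singleton.mpr (Dvd.intro q rfl)
  simp [this]

lemma finrank_quot_pow (h : ℝ[X]) (hh : h ≠ 0) :
    Module.finrank ℝ (ℝ[X] ⧸ Ideal.span {h}) = h.natDegree := by
  have := (AdjoinRoot.powerBasis hh).finrank
  rw [AdjoinRoot.powerBasis_dim] at this
  exact this

lemma finrank_ker_smulX_quot_pow (e : ℕ) :
    Module.finrank ℝ (LinearMap.ker (smulX ((X - C lam) ^ k) :
      (ℝ[X] ⧸ Ideal.span {(X - C lam) ^ e}) →ₗ[ℝ] ℝ[X] ⧸ Ideal.span {(X - C lam) ^ e}))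
      = min k e := by
  set c := min k e with hc
  have hce : c ≤ e := min_le_right _ _
  have hck : c ≤ k := min_le_left _ _
  have hXC : (X - C lam) ≠ 0 := X_sub_C_ne_zero lam
  set φ : ℝ[X] →ₗ[ℝ[X]] ℝ[X] ⧸ Ideal.span {(X - C lam) ^ e} :=
    (Submodule.mkQ _) ∘ₗ (LinearMap.mulLeft ℝ[X] ((X - C lam) ^ (e - c))) with hφ
  have hφ_apply : ∀ q : ℝ[X], φ q =
      Ideal.Quotient.mk _ ((X - C lam) ^ (e - c) * q) := fun q => rfl
  have hle : (Ideal.span {(X - C lam) ^ c} : Submodule ℝ[X] ℝ[X]) ≤ LinearMap.ker φ := by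
    rw [Ideal.span_le]
    intro x hx
    rcases Set.mem_singleton_iff.mp hx with rfl
    rw [SetLike.mem_coe, LinearMap.mem_ker, hφ_apply, ← pow_add,
      Nat.sub_add_cancel hce]
    exact Ideal.Quotient.eq_zero_iff_mem.mpr (Ideal.mem_span_singleton.mpr dvd_rfl)
  set Φ := Submodule.liftQ _ φ hle
  have hinj : Function.Injective Φ := by
    rw [← LinearMap.ker_eq_bot]
    rw [Submodule.ker_liftQ]
    rw [Submodule.eq_bot_iff]
    intro x hx
    obtain ⟨q, hq, rfl⟩ := Submodule.mem_map.mp hx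
    rw [LinearMap.mem_ker, hφ_apply, Ideal.Quotient.eq_zero_iff_mem,
      Ideal.mem_span_singleton] at hq
    rw [Submodule.mkQ_apply, Submodule.Quotient.mk_eq_zero]
    rw [Ideal.mem_span_singleton]
    have : (X - C lam) ^ (e - c) * (X - C lam) ^ c ∣ (X - C lam) ^ (e - c) * q := by
      rw [← pow_add, Nat.sub_add_cancel hce]; exact hq
    exact (mul_dvd_mul_iff_left (pow_ne_zero _ hXC)).mp this
  have hrange : LinearMap.range (Φ.restrictScalars ℝ) =
      LinearMap.ker (smulX ((X - C lam) ^ k) :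
        (ℝ[X] ⧸ Ideal.span {(X - C lam) ^ e}) →ₗ[ℝ] _) := by
    apply le_antisymm
    · rintro _ ⟨x, rfl⟩
      obtain ⟨q, rfl⟩ := Submodule.mkQ_surjective _ x
      rw [LinearMap.mem_ker]
      have : (Φ.restrictScalars ℝ) ((Submodule.mkQ _) q) = φ q := rfl
      rw [this, hφ_apply, smulX_apply, pi_smul_quot, ← map_mul,
        Ideal.Quotient.eq_zero_iff_mem, Ideal.mem_span_singleton]
      refine dvd_trans (pow_dvd_pow _ (by omega : e ≤ k + (e - c))) ?_
      rw [pow_add, ← mul_assoc]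
      exact dvd_mul_right _ q
    · intro v hv
      rw [LinearMap.mem_ker, smulX_apply] at hv
      obtain ⟨q, rfl⟩ := Ideal.Quotient.mk_surjective v
      rw [pi_smul_quot, ← map_mul, Ideal.Quotient.eq_zero_iff_mem,
        Ideal.mem_span_singleton] at hv
      rcases le_or_gt e k with hek | hek
      · -- c = e, e - c = 0, Φ is surjective
        have hc' : e - c = 0 := by omega
        refine ⟨Submodule.mkQ _ q, ?_⟩
        have : (Φ.restrictScalars ℝ) ((Submodule.mkQ _) q) = φ q := rfl
        rw [this, hφ_apply, hc', pow_zero, one_mul]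
      · -- k < e, c = k
        have hck' : c = k := by omega
        have hdvd : (X - C lam) ^ (e - c) ∣ q := by
          have h2 : (X - C lam) ^ k * (X - C lam) ^ (e - k) ∣ (X - C lam) ^ k * q := by
            rw [← pow_add]
            have : k + (e - k) = e := by omega
            rw [this]; exact hv
          have := (mul_dvd_mul_iff_left (pow_ne_zero k hXC)).mp h2
          rwa [hck']
        obtain ⟨t, rfl⟩ := hdvd
        refine ⟨Submodule.mkQ _ t, ?_⟩
        have : (Φ.restrictScalars ℝ) ((Submodule.mkQ _) t) = φ t := rfl
        rw [this, hφ_apply]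
  have hfr : Module.finrank ℝ (LinearMap.range (Φ.restrictScalars ℝ)) =
      Module.finrank ℝ (ℝ[X] ⧸ Ideal.span {(X - C lam) ^ c}) :=
    LinearMap.finrank_range_of_inj (f := Φ.restrictScalars ℝ) hinj
  rw [← hrange, hfr, finrank_quot_pow _ (pow_ne_zero _ hXC), natDegree_pow,
    natDegree_X_sub_C, mul_one]

end Pieces

section Equivs
variable {N N' : Type*} [AddCommGroup N] [Module ℝ N] [Module ℝ[X] N] [IsScalarTower ℝ ℝ[X] N]
  [AddCommGroup N'] [Module ℝ N'] [Module ℝ[X] N'] [IsScalarTower ℝ ℝ[X] N']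

/-- Transport kernels of polynomial scalar action along an `ℝ[X]`-linear equivalence. -/
noncomputable def kerSmulXEquiv (e : N ≃ₗ[ℝ[X]] N') (p : ℝ[X]) :
    (LinearMap.ker (smulX p : N →ₗ[ℝ] N)) ≃ₗ[ℝ] (LinearMap.ker (smulX p : N' →ₗ[ℝ] N')) where
  toFun v := ⟨e v.1, by
    rw [LinearMap.mem_ker, smulX_apply, ← map_smul]
    have h := v.2
    rw [LinearMap.mem_ker, smulX_apply] at h
    rw [h, map_zero]⟩
  invFun w := ⟨e.symm w.1, by
    rw [LinearMap.mem_ker, smulX_apply, ← map_smul]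
    have h := w.2
    rw [LinearMap.mem_ker, smulX_apply] at h
    rw [h, map_zero]⟩
  map_add' v w := Subtype.ext ((e.restrictScalars ℝ).map_add v.1 w.1)
  map_smul' r v := Subtype.ext ((e.restrictScalars ℝ).map_smul r v.1)
  left_inv v := by ext; simp
  right_inv w := by ext; simp

lemma finrank_ker_smulX_congr (e : N ≃ₗ[ℝ[X]] N') (p : ℝ[X]) :
    Module.finrank ℝ (LinearMap.ker (smulX p : N →ₗ[ℝ] N)) =
      Module.finrank ℝ (LinearMap.ker (smulX p : N' →ₗ[ℝ] N')) :=
  (kerSmulXEquiv e p).finrank_eq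

lemma injective_smulX_congr (e : N ≃ₗ[ℝ[X]] N') (p : ℝ[X])
    (h : Function.Injective (smulX p : N' →ₗ[ℝ] N')) :
    Function.Injective (smulX p : N →ₗ[ℝ] N) := by
  intro a b hab
  rw [smulX_apply, smulX_apply] at hab
  have : p • e a = p • e b := by rw [← map_smul, ← map_smul, hab]
  have h2 : (smulX p : N' →ₗ[ℝ] N') (e a) = (smulX p) (e b) := by
    rw [smulX_apply, smulX_apply]; exact this
  exact e.injective (h h2)

variable {κ : Type*} [Fintype κ] (M : κ → Type*) [∀ i, AddCommGroup (M i)]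
  [∀ i, Module ℝ (M i)] [∀ i, Module ℝ[X] (M i)] [∀ i, IsScalarTower ℝ ℝ[X] (M i)]

/-- Kernel of scalar action on a product decomposes as a product. -/
noncomputable def kerSmulXPiEquiv (p : ℝ[X]) :
    (LinearMap.ker (smulX p : (∀ i, M i) →ₗ[ℝ] ∀ i, M i)) ≃ₗ[ℝ]
      ∀ i, LinearMap.ker (smulX p : M i →ₗ[ℝ] M i) where
  toFun v i := ⟨v.1 i, by
    have h := v.2
    rw [LinearMap.mem_ker, smulX_apply] at h
    rw [LinearMap.mem_ker, smulX_apply]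
    exact congrFun h i⟩
  invFun g := ⟨fun i => (g i).1, by
    rw [LinearMap.mem_ker, smulX_apply]
    funext i
    have h := (g i).2
    rw [LinearMap.mem_ker, smulX_apply] at h
    exact h⟩
  map_add' v w := by funext i; ext; rfl
  map_smul' r v := by funext i; ext; rfl
  left_inv v := by ext; rfl
  right_inv g := by funext i; ext; rfl

lemma finrank_ker_smulX_pi (p : ℝ[X]) [∀ i, Module.Finite ℝ (M i)] :
    Module.finrank ℝ (LinearMap.ker (smulX p : (∀ i, M i) →ₗ[ℝ] ∀ i, M i)) =
      ∑ i, Module.finrank ℝ (LinearMap.ker (smulX p : M i →ₗ[ℝ] M i)) := by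
  rw [(kerSmulXPiEquiv M p).finrank_eq, Module.finrank_pi_fintype]

lemma injective_smulX_pi_component (p : ℝ[X]) [DecidableEq κ]
    (h : Function.Injective (smulX p : (∀ i, M i) →ₗ[ℝ] ∀ i, M i)) (i : κ) :
    Function.Injective (smulX p : M i →ₗ[ℝ] M i) := by
  intro a b hab
  rw [smulX_apply, smulX_apply] at hab
  have : (smulX p : (∀ i, M i) →ₗ[ℝ] _) (Pi.single i a) = (smulX p) (Pi.single i b) := by
    rw [smulX_apply, smulX_apply]
    funext j
    by_cases hj : j = i
    · subst hj; simp [Pi.single_eq_same, hab]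
    · simp [Pi.single_eq_of_ne hj]
  have := h this
  have := congrFun this i
  simpa using this

end Equivs

section SpanAssoc

lemma assoc_natDegree_eq {p q : ℝ[X]} (hp : p ≠ 0) (h : Associated p q) :
    p.natDegree = q.natDegree := by
  obtain ⟨u, hu⟩ := h
  have hu0 : (u : ℝ[X]) ≠ 0 := Units.ne_zero u
  rw [← hu, natDegree_mul hp hu0, natDegree_eq_zero_of_isUnit u.isUnit, add_zero]

lemma span_pow_eq_iff {π : ℝ[X]} (hπ : Irreducible π) (e r : ℕ) (hr : 1 ≤ r) (lam : ℝ) :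
    Ideal.span {π ^ e} = Ideal.span {(X - C lam) ^ r} ↔
      (Associated π (X - C lam) ∧ e = r) := by
  constructor
  · intro h
    have hassoc : Associated (π ^ e) ((X - C lam) ^ r) :=
      Ideal.span_singleton_eq_span_singleton.mp h
    have he : e ≠ 0 := by
      rintro rfl
      rw [pow_zero] at hassoc
      have hu : IsUnit ((X - C lam) ^ r) := associated_one_iff_isUnit.mp hassoc.symm
      have := natDegree_eq_zero_of_isUnit hu
      rw [natDegree_pow, natDegree_X_sub_C, mul_one] at this
      omega
    have hdvd : π ∣ (X - C lam) ^ r := dvd_trans (dvd_pow_self π he) hassoc.dvd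
    have hp : Prime π := hπ.prime
    have hdvd1 : π ∣ (X - C lam) := hp.dvd_of_dvd_pow hdvd
    have ha : Associated π (X - C lam) :=
      hπ.associated_of_dvd (irreducible_X_sub_C lam) hdvd1
    refine ⟨ha, ?_⟩
    have h1 : π.natDegree = 1 := by
      rw [assoc_natDegree_eq hπ.ne_zero ha, natDegree_X_sub_C]
    have h2 := assoc_natDegree_eq (pow_ne_zero e hπ.ne_zero) hassoc
    rw [natDegree_pow, natDegree_pow, h1, natDegree_X_sub_C] at h2
    omega
  · rintro ⟨ha, rfl⟩
    exact Ideal.span_singleton_eq_span_singleton.mpr (ha.pow_pow)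

end SpanAssoc

/-- Classification: every piece that is not a negative Jordan-type piece has a square
root of `X` in the quotient ring. -/
lemma good_piece (π : ℝ[X]) (hπ : Irreducible π) (e : ℕ)
    (hinj : Function.Injective (smulX (X : ℝ[X]) :
      (ℝ[X] ⧸ Ideal.span {π ^ e}) →ₗ[ℝ] ℝ[X] ⧸ Ideal.span {π ^ e}))
    (hneg : ¬ ∃ lam : ℝ, lam < 0 ∧ ∃ r : ℕ, 1 ≤ r ∧
      Ideal.span {π ^ e} = Ideal.span {(X - C lam) ^ r}) :
    ∃ w : ℝ[X] ⧸ Ideal.span {π ^ e}, w * w = Ideal.Quotient.mk _ (X : ℝ[X]) := by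
  rcases Nat.eq_zero_or_pos e with rfl | he
  · haveI : Subsingleton (ℝ[X] ⧸ Ideal.span {π ^ 0}) := by
      rw [Submodule.Quotient.subsingleton_iff]
      rw [pow_zero, Ideal.span_singleton_one]
    exact ⟨0, Subsingleton.elim _ _⟩
  have hd0 : π.natDegree ≠ 0 := by
    intro h
    obtain ⟨a, ha⟩ := natDegree_eq_zero.mp h
    rcases eq_or_ne a 0 with rfl | ha0
    · exact hπ.ne_zero (by rw [← ha, map_zero])
    · exact hπ.not_isUnit (by rw [← ha]; exact isUnit_C.mpr (isUnit_iff_ne_zero.mpr ha0))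
  rcases lt_or_ge π.natDegree 2 with hd1 | hd2
  swap
  · exact good_big_degree π hπ hd2 e he
  -- natDegree = 1
  have hd : π.natDegree = 1 := by omega
  obtain ⟨a, ha0, b, hab⟩ := natDegree_eq_one.mp hd
  set lam : ℝ := -b / a with hlam
  have hassoc : Associated (X - C lam) π := by
    refine ⟨(isUnit_C.mpr (isUnit_iff_ne_zero.mpr ha0)).unit, ?_⟩
    have : (X - C lam) * C a = C a * X + C b := by
      rw [hlam]
      rw [sub_mul, ← C_mul]
      have : -b / a * a = -b := by field_simp
      rw [this, mul_comm (X) (C a)]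
      ring_nf
      rw [map_neg]
      ring
    rw [IsUnit.unit_spec, this, hab]
  have hspan : Ideal.span {π ^ e} = Ideal.span {(X - C lam) ^ e} :=
    Ideal.span_singleton_eq_span_singleton.mpr (hassoc.symm.pow_pow)
  rcases lt_trichotomy lam 0 with hl | hl | hl
  · exact absurd ⟨lam, hl, e, he, hspan⟩ hneg
  · -- lam = 0 contradicts injectivity
    exfalso
    have hspan0 : Ideal.span {π ^ e} = Ideal.span {X ^ e} := by
      rw [hspan, hl]; simp
    set m : ℝ[X] ⧸ Ideal.span {π ^ e} := Ideal.Quotient.mk _ ((X : ℝ[X]) ^ (e - 1)) with hm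
    have hXm : (smulX (X : ℝ[X])) m = (smulX (X : ℝ[X])) 0 := by
      rw [smulX_apply, smulX_apply, smul_zero, hm, pi_smul_quot, ← map_mul,
        Ideal.Quotient.eq_zero_iff_mem, hspan0, Ideal.mem_span_singleton,
        ← pow_succ']
      exact pow_dvd_pow _ (by omega)
    have hm0 : m = 0 := hinj hXm
    rw [hm, Ideal.Quotient.eq_zero_iff_mem, hspan0, Ideal.mem_span_singleton] at hm0
    rw [pow_dvd_pow_iff X_ne_zero not_isUnit_X] at hm0
    omega
  · -- lam > 0
    obtain ⟨w, hw⟩ := good_pos_root lam hl e he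
    refine ⟨(Ideal.quotEquivOfEq hspan.symm) w, ?_⟩
    rw [← map_mul, hw, Ideal.quotEquivOfEq_mk]

section Charpoly
variable {n : ℕ} (A : Matrix (Fin n) (Fin n) ℝ)

lemma charpoly_eval (lam : ℝ) :
    A.charpoly.eval lam = (lam • (1 : Matrix (Fin n) (Fin n) ℝ) - A).det := by
  rw [Matrix.charpoly, ← coe_evalRingHom, RingHom.map_det]
  congr 1
  ext i j
  rw [RingHom.mapMatrix_apply, Matrix.map_apply, Matrix.charmatrix_apply]
  by_cases h : i = j
  · subst h
    simp [Matrix.one_apply_eq]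
  · simp [Matrix.diagonal_apply_ne _ h, Matrix.one_apply_ne h]

lemma isRoot_charpoly_of_ker (lam : ℝ)
    (h : LinearMap.ker ((A - lam • 1).mulVecLin) ≠ ⊥) : A.charpoly.IsRoot lam := by
  rw [Polynomial.IsRoot, charpoly_eval]
  have : ∃ v, v ≠ 0 ∧ (A - lam • 1).mulVec v = 0 := by
    rw [Submodule.ne_bot_iff] at h
    obtain ⟨v, hv, hv0⟩ := h
    exact ⟨v, hv0, hv⟩
  have hdet : (A - lam • 1).det = 0 := Matrix.exists_mulVec_eq_zero_iff.mp this
  have : lam • (1 : Matrix (Fin n) (Fin n) ℝ) - A = -(A - lam • 1) := (neg_sub _ _).symm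
  rw [this, Matrix.det_neg, hdet, mul_zero]

end Charpoly

open scoped Classical in
lemma xsqrt_finset {ι : Type} [DecidableEq ι] : ∀ (m : ℕ) (s : Finset ι), s.card = m →
    ∀ (I : ι → Ideal ℝ[X]),
    (∀ i ∈ s, (∃ lam : ℝ, lam < 0 ∧ ∃ r : ℕ, 1 ≤ r ∧ I i = Ideal.span {(X - C lam) ^ r}) ∨
          (∃ w : ℝ[X] ⧸ I i, w * w = Ideal.Quotient.mk _ X)) →
    (∀ lam : ℝ, lam < 0 → ∀ r : ℕ, 1 ≤ r →
        Even ((s.filter (fun i => I i = Ideal.span {(X - C lam) ^ r})).card)) →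
    XSqrt (∀ i : {x // x ∈ s}, ℝ[X] ⧸ I i.1) := by
  intro m
  induction m using Nat.strong_induction_on with
  | _ m IH =>
  intro s hcard I hgood hpar
  rcases Finset.eq_empty_or_nonempty s with rfl | ⟨i₀, hi₀⟩
  · haveI : IsEmpty {x // x ∈ (∅ : Finset ι)} := ⟨fun x => (Finset.notMem_empty _ x.2).elim⟩
    exact xsqrt_of_subsingleton
  have hm : 1 ≤ m := by
    rw [← hcard]; exact Finset.card_pos.mpr ⟨i₀, hi₀⟩
  by_cases hneg : ∃ lam : ℝ, lam < 0 ∧ ∃ r : ℕ, 1 ≤ r ∧ I i₀ = Ideal.span {(X - C lam) ^ r}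
  · obtain ⟨lam, hlam, r, hr, hI0⟩ := hneg
    set J := Ideal.span {(X - C lam) ^ r} with hJ
    set F := s.filter (fun i => I i = J) with hF
    have hi₀F : i₀ ∈ F := Finset.mem_filter.mpr ⟨hi₀, hI0⟩
    have hEv : Even F.card := hpar lam hlam r hr
    have h2 : 2 ≤ F.card := by
      have h1 : 1 ≤ F.card := Finset.card_pos.mpr ⟨i₀, hi₀F⟩
      rcases hEv with ⟨k, hk⟩; omega
    have hne' : (F.erase i₀).Nonempty := by
      rw [← Finset.card_pos, Finset.card_erase_of_mem hi₀F]; omega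
    obtain ⟨i₁, hi₁⟩ := hne'
    have hne : i₁ ≠ i₀ := (Finset.mem_erase.mp hi₁).1
    have hi₁F : i₁ ∈ F := (Finset.mem_erase.mp hi₁).2
    have hI1 : I i₁ = J := (Finset.mem_filter.mp hi₁F).2
    have hi₁s : i₁ ∈ s := (Finset.mem_filter.mp hi₁F).1
    have hi₁e : i₁ ∈ s.erase i₀ := Finset.mem_erase.mpr ⟨hne, hi₁s⟩
    have hrest : XSqrt (∀ i : {x // x ∈ (s.erase i₀).erase i₁}, ℝ[X] ⧸ I i.1) := by
      apply IH (m - 2) (by omega) _ (by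
        rw [Finset.card_erase_of_mem hi₁e, Finset.card_erase_of_mem hi₀, hcard]; omega)
      · intro i hi
        exact hgood i (Finset.mem_of_mem_erase (Finset.mem_of_mem_erase hi))
      · intro lam' hlam' r' hr'
        rw [Finset.filter_erase, Finset.filter_erase]
        by_cases hJJ : Ideal.span {(X - C lam') ^ r'} = J
        · have hff : s.filter (fun i => I i = Ideal.span {(X - C lam') ^ r'}) = F := by
            rw [hF, hJJ]
          rw [hff, Finset.card_erase_of_mem (Finset.mem_erase.mpr ⟨hne, hi₁F⟩),
            Finset.card_erase_of_mem hi₀F]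
          rcases hEv with ⟨k, hk⟩
          exact ⟨k - 1, by omega⟩
        · have h₀ : i₀ ∉ s.filter (fun i => I i = Ideal.span {(X - C lam') ^ r'}) := by
            intro hmem
            exact hJJ ((Finset.mem_filter.mp hmem).2.symm.trans hI0)
          have h₁ : i₁ ∉ (s.filter (fun i => I i = Ideal.span {(X - C lam') ^ r'})).erase i₀ := by
            intro hmem
            exact hJJ ((Finset.mem_filter.mp (Finset.mem_of_mem_erase hmem)).2.symm.trans hI1)
          rw [Finset.erase_eq_of_notMem h₁, Finset.erase_eq_of_notMem h₀]
          exact hpar lam' hlam' r' hr'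
    have equot : (ℝ[X] ⧸ I i₁) ≃ₗ[ℝ[X]] ℝ[X] ⧸ I i₀ :=
      Submodule.quotEquivOfEq _ _ (hI1.trans hI0.symm)
    apply xsqrt_of_equiv (piEraseEquiv (R := ℝ[X]) (fun i => ℝ[X] ⧸ I i) s i₀ hi₀)
    apply xsqrt_of_equiv ((LinearEquiv.refl ℝ[X] _).prodCongr
      (piEraseEquiv (R := ℝ[X]) (fun i => ℝ[X] ⧸ I i) (s.erase i₀) i₁ hi₁e))
    apply xsqrt_of_equiv (LinearEquiv.prodAssoc ℝ[X] _ _ _).symm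
    refine xsqrt_prod ?_ hrest
    apply xsqrt_of_equiv ((LinearEquiv.refl ℝ[X] (ℝ[X] ⧸ I i₀)).prodCongr equot)
    exact xsqrt_pair
  · obtain ⟨w, hw⟩ := (hgood i₀ hi₀).resolve_left hneg
    apply xsqrt_of_equiv (piEraseEquiv (R := ℝ[X]) (fun i => ℝ[X] ⧸ I i) s i₀ hi₀)
    refine xsqrt_prod (xsqrt_quot _ w hw) ?_
    apply IH (m - 1) (by omega) _ (by rw [Finset.card_erase_of_mem hi₀, hcard])
    · intro i hi; exact hgood i (Finset.mem_of_mem_erase hi)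
    · intro lam' hlam' r' hr'
      rw [Finset.filter_erase, Finset.erase_eq_of_notMem]
      · exact hpar lam' hlam' r' hr'
      · intro hmem
        exact hneg ⟨lam', hlam', r', hr', (Finset.mem_filter.mp hmem).2⟩

section ComplexStructure

lemma even_finrank_of_sq_eq_neg {W : Type*} [AddCommGroup W] [Module ℝ W]
    [FiniteDimensional ℝ W] (J : W →ₗ[ℝ] W) (hJ : ∀ w, J (J w) = -w) :
    Even (Module.finrank ℝ W) := by
  letI smulC : SMul ℂ W := ⟨fun z w => z.re • w + z.im • J w⟩
  have hsmul : ∀ (z : ℂ) (w : W), z • w = z.re • w + z.im • J w := fun _ _ => rfl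
  letI cmod : Module ℂ W :=
    { smul := fun z w => z.re • w + z.im • J w
      one_smul := fun w => by rw [hsmul]; simp
      mul_smul := fun z₁ z₂ w => by
        simp only [hsmul]
        simp only [Complex.mul_re, Complex.mul_im, map_add, map_smul, hJ, sub_smul, add_smul,
          smul_add, smul_smul, smul_neg]
        module
      smul_zero := fun z => by rw [hsmul]; simp
      smul_add := fun z w₁ w₂ => by
        simp only [hsmul, map_add, smul_add]; module
      add_smul := fun z₁ z₂ w => by
        simp only [hsmul, Complex.add_re, Complex.add_im, add_smul]; module
      zero_smul := fun w => by rw [hsmul]; simp }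
  letI : IsScalarTower ℝ ℂ W := ⟨fun r z w => by
    simp only [hsmul, Complex.smul_re, Complex.smul_im, smul_eq_mul, mul_smul, smul_add]⟩
  haveI : Module.Finite ℂ W := Module.Finite.of_restrictScalars_finite ℝ ℂ W
  have h := Module.finrank_mul_finrank ℝ ℂ W
  rw [Complex.finrank_real_complex] at h
  exact ⟨Module.finrank ℂ W, by omega⟩

lemma even_finrank_ker_pow {V : Type*} [AddCommGroup V] [Module ℝ V] [FiniteDimensional ℝ V]
    (y : V →ₗ[ℝ] V) (lam : ℝ) (hlam : lam < 0) (k : ℕ) :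
    Even (Module.finrank ℝ (LinearMap.ker ((y * y - lam • (1 : V →ₗ[ℝ] V)) ^ k))) := by
  set u : V →ₗ[ℝ] V := y * y - lam • 1 with hu
  have hcomm : Commute y u := by
    rw [hu]
    exact ((Commute.refl y).mul_right (Commute.refl y)).sub_right
      ((Commute.one_right y).smul_right lam)
  have hpowcomm : ∀ (j : ℕ) (x : V), (u ^ j) (u x) = u ((u ^ j) x) := by
    intro j x
    have h1 : (u ^ j) * u = u * (u ^ j) := ((Commute.refl u).pow_left j)
    calc (u ^ j) (u x) = ((u ^ j) * u) x := rfl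
    _ = (u * (u ^ j)) x := by rw [h1]
    _ = u ((u ^ j) x) := rfl
  induction k with
  | zero =>
    have h0 : LinearMap.ker (u ^ 0) = ⊥ := by
      rw [pow_zero, Module.End.one_eq_id, LinearMap.ker_id]
    rw [h0, finrank_bot]
    exact Even.zero
  | succ k IH =>
    set W₁ := LinearMap.ker (u ^ k) with hW₁
    set W₂ := LinearMap.ker (u ^ (k + 1)) with hW₂
    have hle : W₁ ≤ W₂ := by
      intro v hv
      rw [hW₂, LinearMap.mem_ker, pow_succ', Module.End.mul_apply]
      rw [hW₁, LinearMap.mem_ker] at hv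
      rw [hv, map_zero]
    set p : Submodule ℝ W₂ := Submodule.comap W₂.subtype W₁ with hp
    have hQP : Module.finrank ℝ (W₂ ⧸ p) + Module.finrank ℝ p = Module.finrank ℝ W₂ :=
      Submodule.finrank_quotient_add_finrank p
    have hpW₁ : Module.finrank ℝ p = Module.finrank ℝ W₁ :=
      (Submodule.comapSubtypeEquivOfLe hle).finrank_eq
    -- y restricts to W₂
    have hyW₂ : ∀ v ∈ W₂, y v ∈ W₂ := by
      intro v hv
      rw [hW₂, LinearMap.mem_ker] at hv ⊢
      have heq : (u ^ (k+1)) (y v) = y ((u ^ (k+1)) v) := by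
        have h2 := (hcomm.pow_right (k+1))
        calc (u ^ (k+1)) (y v) = ((u ^ (k+1)) * y) v := rfl
        _ = (y * (u ^ (k+1))) v := by rw [← h2]
        _ = y ((u ^ (k+1)) v) := rfl
      rw [heq, hv, map_zero]
    set yr : W₂ →ₗ[ℝ] W₂ := y.restrict hyW₂ with hyr
    have hyp : p ≤ Submodule.comap yr p := by
      intro v hv
      rw [hp, Submodule.mem_comap, hW₁, LinearMap.mem_ker] at hv
      rw [Submodule.mem_comap, hp, Submodule.mem_comap, hW₁, LinearMap.mem_ker]
      have hval : (W₂.subtype) (yr v) = y (W₂.subtype v) := rfl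
      have hcm : (u ^ k) (y (W₂.subtype v)) = y ((u ^ k) (W₂.subtype v)) := by
        have h2 := (hcomm.pow_right k)
        calc (u ^ k) (y (W₂.subtype v)) = ((u ^ k) * y) (W₂.subtype v) := rfl
        _ = (y * (u ^ k)) (W₂.subtype v) := by rw [← h2]
        _ = y ((u ^ k) (W₂.subtype v)) := rfl
      rw [hval, hcm, hv, map_zero]
    set yq : (W₂ ⧸ p) →ₗ[ℝ] (W₂ ⧸ p) := Submodule.mapQ p p yr hyp with hyq
    have hsq : ∀ q : W₂ ⧸ p, yq (yq q) = lam • q := by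
      intro q
      obtain ⟨v, rfl⟩ := Submodule.Quotient.mk_surjective p q
      rw [hyq, Submodule.mapQ_apply, Submodule.mapQ_apply]
      rw [show lam • (Submodule.Quotient.mk v : W₂ ⧸ p) = Submodule.Quotient.mk (lam • v) from rfl]
      rw [← sub_eq_zero, ← Submodule.Quotient.mk_sub, Submodule.Quotient.mk_eq_zero]
      rw [hp, Submodule.mem_comap]
      rw [hW₁, LinearMap.mem_ker]
      have hval : (W₂.subtype) (yr (yr v) - lam • v) = u (W₂.subtype v) := by
        have h1 : (W₂.subtype) (yr (yr v)) = y (y (W₂.subtype v)) := rfl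
        rw [map_sub, h1, map_smul]
        rw [hu]
        simp [LinearMap.sub_apply, LinearMap.smul_apply, Module.End.mul_apply]
      rw [hval]
      have hstep : (u ^ k) (u (W₂.subtype v)) = (u ^ (k+1)) (W₂.subtype v) := by
        rw [pow_succ]; rfl
      have hv2 : (u ^ (k + 1)) (W₂.subtype v) = 0 := LinearMap.mem_ker.mp v.2
      exact hstep.trans hv2
    -- build J
    set s : ℝ := Real.sqrt (-lam) with hs
    have hs0 : s ≠ 0 := ne_of_gt (Real.sqrt_pos.mpr (by linarith))
    have hss : s * s = -lam := Real.mul_self_sqrt (by linarith)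
    have hEvenQ : Even (Module.finrank ℝ (W₂ ⧸ p)) := by
      refine even_finrank_of_sq_eq_neg ((s⁻¹) • yq) ?_
      intro w
      simp only [LinearMap.smul_apply, map_smul]
      rw [hsq, smul_smul, smul_smul]
      have hval : s⁻¹ * s⁻¹ * lam = -1 := by
        field_simp
        nlinarith [hss]
      rw [hval, neg_one_smul]
    rw [← hQP, hpW₁]
    exact hEvenQ.add IH

end ComplexStructure


section Glue
variable {n : ℕ} (A : Matrix (Fin n) (Fin n) ℝ)

lemma tl (M : Matrix (Fin n) (Fin n) ℝ) : Matrix.toLinAlgEquiv' M = M.mulVecLin := by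
  ext v : 1; rfl

lemma mulVecLin_aeval (q : ℝ[X]) :
    (Polynomial.aeval A q).mulVecLin = Polynomial.aeval A.mulVecLin q := by
  have h := Polynomial.aeval_algHom_apply
    (Matrix.toLinAlgEquiv' (n := Fin n) (R := ℝ)).toAlgHom A q
  rw [← tl, ← tl]
  exact h.symm

lemma matrix_pow_aeval (lam : ℝ) (k : ℕ) :
    (A - lam • 1) ^ k = Polynomial.aeval A ((X - C lam) ^ k) := by
  rw [map_pow, map_sub, aeval_X, aeval_C, Algebra.algebraMap_eq_smul_one]

/-- Transport of kernels to the `AEval` module. -/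
noncomputable def kerAevalEquiv {V : Type} [AddCommGroup V] [Module ℝ V]
    (f : V →ₗ[ℝ] V) (q : ℝ[X]) :
    LinearMap.ker (Polynomial.aeval f q) ≃ₗ[ℝ]
      LinearMap.ker (smulX q : Module.AEval' f →ₗ[ℝ] Module.AEval' f) where
  toFun v := ⟨Module.AEval.of ℝ V f v.1, by
    rw [LinearMap.mem_ker, smulX_apply, ← Module.AEval.of_aeval_smul]
    have hv : (Polynomial.aeval f q) v.1 = 0 := LinearMap.mem_ker.mp v.2
    have : (Polynomial.aeval f q) • v.1 = 0 := hv
    rw [this, map_zero]⟩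
  invFun w := ⟨(Module.AEval.of ℝ V f).symm w.1, by
    rw [LinearMap.mem_ker]
    have hw : (q : ℝ[X]) • w.1 = 0 := by
      have := w.2; rw [LinearMap.mem_ker, smulX_apply] at this; exact this
    have h2 := Module.AEval.of_symm_smul f q w.1
    rw [hw, map_zero] at h2
    exact h2.symm⟩
  map_add' v w := Subtype.ext (map_add _ _ _)
  map_smul' r v := Subtype.ext (map_smul (Module.AEval.of ℝ V f) r v.1)
  left_inv v := Subtype.ext (by simp)
  right_inv w := Subtype.ext (by simp)

end Glue

section Main
open Module

noncomputable def piUnivEquiv {ι : Type} [Fintype ι] (M : ι → Type) [∀ i, AddCommMonoid (M i)]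
    [∀ i, Module ℝ[X] (M i)] :
    (∀ i, M i) ≃ₗ[ℝ[X]] (∀ j : {x // x ∈ (Finset.univ : Finset ι)}, M j.1) where
  toFun f j := f j.1
  invFun g i := g ⟨i, Finset.mem_univ i⟩
  map_add' _ _ := rfl
  map_smul' _ _ := rfl
  left_inv f := rfl
  right_inv g := rfl

variable {n : ℕ} (A : Matrix (Fin n) (Fin n) ℝ)

lemma hrank_lemma (lam : ℝ) (k : ℕ) :
    ((A - lam • 1) ^ k).rank +
      Module.finrank ℝ (LinearMap.ker ((A - lam • 1) ^ k).mulVecLin) = n := by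
  have h := LinearMap.finrank_range_add_finrank_ker ((A - lam • 1) ^ k).mulVecLin
  rw [Module.finrank_fin_fun] at h
  exact h

end Main

/-- **Existence criterion for real square roots.** A real invertible `n × n` matrix `A`
has a real square root iff, for every `r ≥ 1` and every real eigenvalue `λ < 0` of `A`,
the number of Jordan blocks `J_r(λ)` of `A`, namely
`rank((A − λI)^{r−1}) − 2·rank((A − λI)^r) + rank((A − λI)^{r+1})`, is even. -/
theorem real_sqrt_exists_iff (n : ℕ) (A : Matrix (Fin n) (Fin n) ℝ) (hA : IsUnit A) :
    (∃ X : Matrix (Fin n) (Fin n) ℝ, X ^ 2 = A) ↔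
      (∀ r : ℕ, 1 ≤ r → ∀ lam : ℝ, lam < 0 → A.charpoly.IsRoot lam →
        Even ((((A - lam • (1 : Matrix (Fin n) (Fin n) ℝ)) ^ (r - 1)).rank : ℤ)
          - 2 * (((A - lam • (1 : Matrix (Fin n) (Fin n) ℝ)) ^ r).rank : ℤ)
          + (((A - lam • (1 : Matrix (Fin n) (Fin n) ℝ)) ^ (r + 1)).rank : ℤ))) := by
  constructor
  · rintro ⟨Y, hY⟩ r hr lam hlam _
    have heven : ∀ k, Even (Module.finrank ℝ
        (LinearMap.ker ((A - lam • 1) ^ k).mulVecLin)) := by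
      intro k
      set y := Y.mulVecLin with hy
      have hAm : (A - lam • 1) ^ k = (Y * Y - lam • 1) ^ k := by rw [← hY, pow_two]
      have hml : ((Y * Y - lam • 1) ^ k).mulVecLin
          = (y * y - lam • (1 : (Fin n → ℝ) →ₗ[ℝ] Fin n → ℝ)) ^ k := by
        calc ((Y * Y - lam • 1) ^ k).mulVecLin
            = Matrix.toLinAlgEquiv' ((Y * Y - lam • 1) ^ k) := (tl _).symm
        _ = (Matrix.toLinAlgEquiv' (Y * Y - lam • 1)) ^ k := by rw [map_pow]
        _ = (Matrix.toLinAlgEquiv' Y * Matrix.toLinAlgEquiv' Y - lam • 1) ^ k := by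
              rw [map_sub, map_mul, map_smul, map_one]
        _ = (y * y - lam • 1) ^ k := by rw [tl]
      rw [hAm, hml]
      exact even_finrank_ker_pow y lam hlam k
    obtain ⟨a1, ha1⟩ := heven (r - 1)
    obtain ⟨a2, ha2⟩ := heven r
    obtain ⟨a3, ha3⟩ := heven (r + 1)
    have e1 : (((A - lam • 1) ^ (r - 1)).rank : ℤ) = n - (a1 + a1) := by
      have h := hrank_lemma A lam (r - 1); rw [ha1] at h
      have := h ▸ (rfl : (n:ℤ) = n); push_cast [← h]; ring
    have e2 : (((A - lam • 1) ^ r).rank : ℤ) = n - (a2 + a2) := by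
      have h := hrank_lemma A lam r; rw [ha2] at h; push_cast [← h]; ring
    have e3 : (((A - lam • 1) ^ (r + 1)).rank : ℤ) = n - (a3 + a3) := by
      have h := hrank_lemma A lam (r + 1); rw [ha3] at h; push_cast [← h]; ring
    exact ⟨-a1 + 2 * a2 - a3, by rw [e1, e2, e3]; ring⟩
  · intro hpar
    classical
    set f : (Fin n → ℝ) →ₗ[ℝ] (Fin n → ℝ) := A.mulVecLin with hf
    have htors : Module.IsTorsion ℝ[X] (Module.AEval' f) := by
      intro v
      refine ⟨⟨f.charpoly, mem_nonZeroDivisors_of_ne_zero f.charpoly_monic.ne_zero⟩, ?_⟩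
      show (f.charpoly : ℝ[X]) • v = 0
      have h := Module.AEval.of_symm_smul (R := ℝ) (M := Fin n → ℝ) f f.charpoly v
      rw [LinearMap.aeval_self_charpoly] at h
      have h0 : (0 : (Fin n → ℝ) →ₗ[ℝ] (Fin n → ℝ)) •
          ((Module.AEval.of ℝ (Fin n → ℝ) f).symm v) = 0 := rfl
      rw [h0] at h
      exact ((Module.AEval.of ℝ (Fin n → ℝ) f).symm.map_eq_zero_iff).mp h
    obtain ⟨ι, hfin, p, hirr, e, ⟨L⟩⟩ := Module.equiv_directSum_of_isTorsion htors
    haveI := hfin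
    letI : DecidableEq ι := Classical.decEq ι
    set I : ι → Ideal ℝ[X] := fun i => Ideal.span {p i ^ e i} with hI
    have L2 : Module.AEval' f ≃ₗ[ℝ[X]] DirectSum ι (fun i => ℝ[X] ⧸ I i) := L
    haveI hFD : ∀ i, Module.Finite ℝ (ℝ[X] ⧸ I i) := fun i =>
      Module.Finite.of_basis
        (AdjoinRoot.powerBasis (pow_ne_zero (e i) (hirr i).ne_zero)).basis
    set E1 : Module.AEval' f ≃ₗ[ℝ[X]] ∀ i, ℝ[X] ⧸ I i :=
      L2.trans (DirectSum.linearEquivFunOnFintype ℝ[X] ι _) with hE1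
    have hker : ∀ (lam : ℝ) (k : ℕ),
        Module.finrank ℝ (LinearMap.ker ((A - lam • 1) ^ k).mulVecLin)
          = ∑ i, min k (if Associated (p i) (X - C lam) then e i else 0) := by
      intro lam k
      rw [matrix_pow_aeval, mulVecLin_aeval, ← hf]
      rw [(kerAevalEquiv f ((X - C lam) ^ k)).finrank_eq]
      rw [finrank_ker_smulX_congr E1 ((X - C lam) ^ k)]
      rw [finrank_ker_smulX_pi]
      refine Finset.sum_congr rfl (fun i _ => ?_)
      by_cases ha : Associated (p i) (X - C lam)
      · rw [if_pos ha]
        have hspan : Ideal.span {p i ^ e i} = Ideal.span {(X - C lam) ^ e i} :=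
          Ideal.span_singleton_eq_span_singleton.mpr (ha.pow_pow)
        rw [finrank_ker_smulX_congr (Submodule.quotEquivOfEq _ _ hspan) _]
        exact finrank_ker_smulX_quot_pow lam k (e i)
      · rw [if_neg ha, ker_smulX_quot_coprime lam k (hirr i) ha (e i), finrank_bot]
        omega
    have hparity : ∀ lam : ℝ, lam < 0 → ∀ r : ℕ, 1 ≤ r →
        Even ((Finset.univ.filter
          (fun i => I i = Ideal.span {(X - C lam) ^ r})).card) := by
      intro lam hlam r hr
      have hfilter_eq : (Finset.univ.filter (fun i => I i = Ideal.span {(X - C lam) ^ r}))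
          = (Finset.univ.filter
            (fun i => (if Associated (p i) (X - C lam) then e i else 0) = r)) := by
        apply Finset.filter_congr
        intro i _
        by_cases ha : Associated (p i) (X - C lam)
        · simp only [if_pos ha, hI]
          rw [span_pow_eq_iff (hirr i) (e i) r hr lam]
          exact ⟨fun h2 => h2.2, fun h2 => ⟨ha, h2⟩⟩
        · simp only [if_neg ha, hI]
          constructor
          · intro hsp
            exact absurd ((span_pow_eq_iff (hirr i) (e i) r hr lam).mp hsp).1 ha
          · intro h0; omega
      rw [hfilter_eq]
      by_cases hroot : A.charpoly.IsRoot lam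
      · have hEZ := hpar r hr lam hlam hroot
        obtain ⟨r', rfl⟩ : ∃ r', r = r' + 1 := ⟨r - 1, by omega⟩
        set c : ι → ℕ := fun i => if Associated (p i) (X - C lam) then e i else 0 with hc
        have hcast : ∀ k : ℕ, ((((A - lam • 1) ^ k).rank : ℤ))
            = n - ∑ i, ((min k (c i) : ℕ) : ℤ) := by
          intro k
          have h1 := hrank_lemma A lam k
          rw [hker lam k] at h1
          have h2 : (((A - lam • 1) ^ k).rank : ℤ) + ∑ i, ((min k (c i) : ℕ) : ℤ) = n := by
            exact_mod_cast h1
          linarith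
        have hcard : ((Finset.univ.filter (fun i => c i = r' + 1)).card : ℤ)
            = 2 * (∑ i, ((min (r' + 1) (c i) : ℕ) : ℤ))
              - (∑ i, ((min r' (c i) : ℕ) : ℤ)) - (∑ i, ((min (r' + 2) (c i) : ℕ) : ℤ)) := by
          rw [Finset.card_filter]
          push_cast
          rw [Finset.mul_sum, ← Finset.sum_sub_distrib, ← Finset.sum_sub_distrib]
          refine Finset.sum_congr rfl (fun i _ => ?_)
          have hm : ∀ a b : ℕ, ((min a b : ℕ) : ℤ) = min (a : ℤ) (b : ℤ) :=
            fun a b => by exact_mod_cast Nat.cast_min a b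
          split_ifs with hh
          · rw [hh]; push_cast [hm]; omega
          · have : (c i : ℤ) ≠ (r' + 1 : ℤ) := by exact_mod_cast hh
            push_cast [hm]; omega
        have hfinal : ((Finset.univ.filter (fun i => c i = r' + 1)).card : ℤ)
            = (((A - lam • 1) ^ (r' + 1 - 1)).rank : ℤ)
              - 2 * (((A - lam • 1) ^ (r' + 1)).rank : ℤ)
              + (((A - lam • 1) ^ (r' + 1 + 1)).rank : ℤ) := by
          rw [hcard, hcast, hcast, hcast]
          simp only [Nat.add_sub_cancel]
          push_cast
          ring
        rw [← Int.even_coe_nat, hfinal]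
        exact hEZ
      · have hempty : (Finset.univ.filter
            (fun i => (if Associated (p i) (X - C lam) then e i else 0) = r)) = ∅ := by
          rw [Finset.filter_eq_empty_iff]
          intro i _
          intro hci
          apply hroot
          apply isRoot_charpoly_of_ker A lam
          intro hbot
          have h1 := hker lam 1
          rw [pow_one, hbot, finrank_bot] at h1
          have hle := Finset.single_le_sum
            (f := fun j => min 1 (if Associated (p j) (X - C lam) then e j else 0))
            (fun j _ => Nat.zero_le _) (Finset.mem_univ i)
          have hle3 : (min 1 (if Associated (p i) (X - C lam) then e i else 0))
              ≤ ∑ j, min 1 (if Associated (p j) (X - C lam) then e j else 0) := hle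
          rw [← h1] at hle3
          rw [hci] at hle3
          omega
        rw [hempty]
        simp
    -- injectivity of X action
    have hfinj : Function.Injective f := by
      obtain ⟨u, hu⟩ := hA
      intro x y hxy
      have key : ∀ z, (↑u⁻¹ : Matrix (Fin n) (Fin n) ℝ).mulVecLin (f z) = z := by
        intro z
        have h3 : (↑u⁻¹ : Matrix (Fin n) (Fin n) ℝ).mulVecLin (f z)
            = ((↑u⁻¹ : Matrix (Fin n) (Fin n) ℝ) * A).mulVecLin z := by
          rw [Matrix.mulVecLin_mul]; rfl
        rw [h3, ← hu, Units.inv_mul, Matrix.mulVecLin_one]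
        rfl
      rw [← key x, ← key y, hxy]
    have hinjAE : Function.Injective (smulX (X : ℝ[X]) :
        Module.AEval' f →ₗ[ℝ] Module.AEval' f) := by
      intro a b hab
      rw [smulX_apply, smulX_apply] at hab
      have h1 := congrArg (Module.AEval.of ℝ (Fin n → ℝ) f).symm hab
      rw [Module.AEval.of_symm_X_smul, Module.AEval.of_symm_X_smul] at h1
      have h2 : f ((Module.AEval.of ℝ (Fin n → ℝ) f).symm a)
          = f ((Module.AEval.of ℝ (Fin n → ℝ) f).symm b) := h1
      exact (Module.AEval.of ℝ (Fin n → ℝ) f).symm.injective (hfinj h2)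
    have hinjPi : Function.Injective (smulX (X : ℝ[X]) :
        (∀ i, ℝ[X] ⧸ I i) →ₗ[ℝ] ∀ i, ℝ[X] ⧸ I i) :=
      injective_smulX_congr E1.symm X hinjAE
    have hgoodall : ∀ i ∈ (Finset.univ : Finset ι),
        (∃ lam : ℝ, lam < 0 ∧ ∃ r : ℕ, 1 ≤ r ∧ I i = Ideal.span {(X - C lam) ^ r}) ∨
          (∃ w : ℝ[X] ⧸ I i, w * w = Ideal.Quotient.mk _ X) := by
      intro i _
      by_cases hneg : ∃ lam : ℝ, lam < 0 ∧ ∃ r : ℕ, 1 ≤ r ∧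
          I i = Ideal.span {(X - C lam) ^ r}
      · left; exact hneg
      · right
        exact good_piece (p i) (hirr i) (e i)
          (injective_smulX_pi_component (fun i => ℝ[X] ⧸ I i) X hinjPi i) hneg
    have hXS : XSqrt (Module.AEval' f) := by
      apply xsqrt_of_equiv (E1.trans (piUnivEquiv (fun i => ℝ[X] ⧸ I i)))
      exact xsqrt_finset (Finset.univ.card) Finset.univ rfl I hgoodall hparity
    obtain ⟨g, hg⟩ := hXS
    set oF := Module.AEval.of ℝ (Fin n → ℝ) f with hoF
    set g' : (Fin n → ℝ) →ₗ[ℝ] (Fin n → ℝ) :=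
      (oF.symm.toLinearMap ∘ₗ g) ∘ₗ oF.toLinearMap with hg'
    have hgg : g' ∘ₗ g' = f := by
      apply LinearMap.ext
      intro v
      simp only [hg', LinearMap.comp_apply, LinearEquiv.coe_coe]
      rw [oF.apply_symm_apply, hg, hoF, Module.AEval.of_symm_X_smul]
      rfl
    refine ⟨LinearMap.toMatrix' g', ?_⟩
    rw [pow_two, ← LinearMap.toMatrix'_comp, hgg]
    have : f = Matrix.toLin' A := by rw [hf]; ext v : 1; rfl
    rw [this, LinearMap.toMatrix'_toLin']
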